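/- Let A be a quaternion algebra over F (associative with canonical involution σ and norm N), f, g ∈ Aut(A) automorphisms with f² = g² = id, and c ∈ A× such that 1 − c f(c) and 1 − c g(c) are invertible. Define x∘y = xy − c f(x) g(y) and e = 1. Then L_e^{-1}(y) = (1 − c g(c))^{-1}(y + c g(y)) and R_e^{-1}(x) = (1 − c f(c))^{-1}(x + c f(x)), and the unital twisted product satisfies x∗y = [(1−c f(c))^{-1}(x + c f(x))]·[(1−c g(c))^{-1}(y + c g(y))] − c·[(1−f(c)c)^{-1}(f(x) + f(c)x)]·[(1−g(c)c)^{-1}(g(y) + g(c)y)]. -/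
import Mathlib

section aux
variable {F : Type*} [Field F] {A : Type*} [Ring A] [Algebra F A]

lemma aux_map_inverse (f : A ≃ₐ[F] A) (a : A) :
    f (Ring.inverse a) = Ring.inverse (f a) := by
  by_cases h : IsUnit a
  · have h' : IsUnit (f a) := h.map f
    have h1 : f (Ring.inverse a) * f a = 1 := by
      rw [← map_mul, Ring.inverse_mul_cancel a h, map_one]
    have h2 : Ring.inverse (f a) = Ring.inverse (f a) * (f a * f (Ring.inverse a)) := by
      rw [← map_mul, Ring.mul_inverse_cancel a h, map_one, mul_one]
    rw [h2, ← mul_assoc, Ring.inverse_mul_cancel _ h', one_mul]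
  · have h' : ¬ IsUnit (f a) := fun hu => h (by
      have := hu.map f.symm
      simpa using this)
    rw [Ring.inverse_non_unit a h, Ring.inverse_non_unit _ h', map_zero]

lemma aux_comm (c d : A) (h1 : IsUnit ((1:A) - c * d)) (h2 : IsUnit ((1:A) - d * c)) :
    c * Ring.inverse ((1:A) - d * c) = Ring.inverse ((1:A) - c * d) * c := by
  have key : ((1:A) - c * d) * (c * Ring.inverse ((1:A) - d * c)) = c := by
    have : ((1:A) - c * d) * c = c * ((1:A) - d * c) := by noncomm_ring
    rw [← mul_assoc, this, mul_assoc, Ring.mul_inverse_cancel _ h2, mul_one]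
  calc c * Ring.inverse ((1:A) - d * c)
      = Ring.inverse ((1:A) - c * d) * (((1:A) - c * d) * (c * Ring.inverse ((1:A) - d * c))) := by
        rw [← mul_assoc, Ring.inverse_mul_cancel _ h1, one_mul]
    _ = Ring.inverse ((1:A) - c * d) * c := by rw [key]

end aux

/-- For `x∘y = xy − c f(x) g(y)` with `f² = g² = id` and the relevant elements
invertible, the explicit inverses of `L_e`, `R_e` (`e = 1`) and the explicit unital
twisted multiplication `∗` are as stated. -/
theorem stmt_17 (F : Type*) [Field F] (A : Type*) [Ring A] [Algebra F A]
    (f g : A ≃ₐ[F] A) (hf2 : ∀ x : A, f (f x) = x) (hg2 : ∀ x : A, g (g x) = x)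
    (c : A) (hc : IsUnit c)
    (hu1 : IsUnit ((1 : A) - c * f c)) (hu2 : IsUnit ((1 : A) - c * g c))
    (hu3 : IsUnit ((1 : A) - f c * c)) (hu4 : IsUnit ((1 : A) - g c * c)) :
    (∀ y : A,
      (1 : A) * (Ring.inverse ((1 : A) - c * g c) * (y + c * g y))
        - c * (f 1 * g (Ring.inverse ((1 : A) - c * g c) * (y + c * g y))) = y) ∧
    (∀ x : A,
      (Ring.inverse ((1 : A) - c * f c) * (x + c * f x)) * 1
        - c * (f (Ring.inverse ((1 : A) - c * f c) * (x + c * f x)) * g 1) = x) ∧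
    (∀ x y : A,
      (Ring.inverse ((1 : A) - c * f c) * (x + c * f x)) *
          (Ring.inverse ((1 : A) - c * g c) * (y + c * g y))
        - c * (f (Ring.inverse ((1 : A) - c * f c) * (x + c * f x)) *
               g (Ring.inverse ((1 : A) - c * g c) * (y + c * g y)))
      = (Ring.inverse ((1 : A) - c * f c) * (x + c * f x)) *
          (Ring.inverse ((1 : A) - c * g c) * (y + c * g y))
        - c * ((Ring.inverse ((1 : A) - f c * c) * (f x + f c * x)) *
               (Ring.inverse ((1 : A) - g c * c) * (g y + g c * y)))) := by
  have hfim : ∀ x : A, f (Ring.inverse ((1:A) - c * f c) * (x + c * f x))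
      = Ring.inverse ((1:A) - f c * c) * (f x + f c * x) := by
    intro x
    rw [map_mul, aux_map_inverse]
    congr 1
    · congr 1
      rw [map_sub, map_one, map_mul, hf2]
    · rw [map_add, map_mul, hf2]
  have hgim : ∀ y : A, g (Ring.inverse ((1:A) - c * g c) * (y + c * g y))
      = Ring.inverse ((1:A) - g c * c) * (g y + g c * y) := by
    intro y
    rw [map_mul, aux_map_inverse]
    congr 1
    · congr 1
      rw [map_sub, map_one, map_mul, hg2]
    · rw [map_add, map_mul, hg2]
  refine ⟨?_, ?_, ?_⟩
  · intro y
    rw [map_one, one_mul, one_mul, hgim]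
    rw [← mul_assoc, aux_comm c (g c) hu2 hu4, mul_assoc]
    rw [← mul_sub]
    have : (y + c * g y) - c * (g y + g c * y) = ((1:A) - c * g c) * y := by noncomm_ring
    rw [this, ← mul_assoc, Ring.inverse_mul_cancel _ hu2, one_mul]
  · intro x
    rw [map_one, mul_one, mul_one, hfim]
    rw [← mul_assoc, aux_comm c (f c) hu1 hu3, mul_assoc]
    rw [← mul_sub]
    have : (x + c * f x) - c * (f x + f c * x) = ((1:A) - c * f c) * x := by noncomm_ring
    rw [this, ← mul_assoc, Ring.inverse_mul_cancel _ hu1, one_mul]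
  · intro x y
    rw [hfim, hgim]
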